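/- arXiv:1308.6235 — 4 statements merged into one kernel-verified Lean document; each statement's English description precedes it below -/
import Mathlib

section
/- Let w : [-1,1] → ℝ be continuous with w ≥ 0 on [-1,1] and w(x) > 0 for every x ∈ (-1,1). Then for every δ > 0 there exists a constant K(δ) > 0 such that for every twice continuously differentiable function v : [-1,1] → ℝ with v(±1) = v'(±1) = 0 one has ∫_{-1}^{1} |v'(x)|² dx ≤ δ ∫_{-1}^{1} |v''(x)|² dx + K(δ) ( ∫_{-1}^{1} w(x)|v(x)| dx )². -/
open MeasureTheory Set

set_option maxHeartbeats 2000000 in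
/-- A Poincaré-type inequality with a weighted L¹ correction term
on the interval (-1,1), for clamped C² functions. -/
theorem stmt_0
    (w : ℝ → ℝ)
    (hw_cont : ContinuousOn w (Icc (-1 : ℝ) 1))
    (hw_nonneg : ∀ x ∈ Icc (-1 : ℝ) 1, 0 ≤ w x)
    (hw_pos : ∀ x ∈ Ioo (-1 : ℝ) 1, 0 < w x) :
    ∀ δ : ℝ, 0 < δ → ∃ K : ℝ, 0 < K ∧
      ∀ v : ℝ → ℝ, ContDiff ℝ 2 v →
        v (-1) = 0 → v 1 = 0 → deriv v (-1) = 0 → deriv v 1 = 0 →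
        (∫ x in (-1 : ℝ)..1, (deriv v x) ^ 2) ≤
          δ * (∫ x in (-1 : ℝ)..1, (deriv (deriv v) x) ^ 2) +
            K * (∫ x in (-1 : ℝ)..1, w x * |v x|) ^ 2 := by
  intro δ hδ
  obtain ⟨η, hη_def⟩ : ∃ η : ℝ, η = min (1/2) (δ/6) := ⟨_, rfl⟩
  have hη0 : 0 < η := by rw [hη_def]; exact lt_min (by norm_num) (by linarith)
  have hη1 : η ≤ 1/2 := by rw [hη_def]; exact min_le_left _ _
  have hη2 : η ≤ δ/6 := by rw [hη_def]; exact min_le_right _ _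
  have hsub : Icc (-1+η) (1-η) ⊆ Icc (-1:ℝ) 1 := by
    apply Icc_subset_Icc <;> linarith
  have hne : (-1+η : ℝ) ≤ 1-η := by linarith
  obtain ⟨x₀, hx₀, hmin'⟩ := (isCompact_Icc (a := (-1+η:ℝ)) (b := 1-η)).exists_isMinOn
    (nonempty_Icc.mpr hne) (hw_cont.mono hsub)
  obtain ⟨c, hc_def⟩ : ∃ c : ℝ, c = w x₀ := ⟨_, rfl⟩
  have hmin : ∀ x ∈ Icc (-1+η:ℝ) (1-η), c ≤ w x := fun x hx => hc_def ▸ hmin' hx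
  have hc : 0 < c := hc_def ▸ hw_pos x₀ ⟨by linarith [hx₀.1], by linarith [hx₀.2]⟩
  refine ⟨2/(δ^3*c^2), by positivity, ?_⟩
  intro v hv hv1 hv2 hd1 hd2
  -- regularity
  have h2 : ContDiff ℝ (1+1 : ℕ) v := by norm_num [hv]
  have hC1 : ContDiff ℝ 1 (deriv v) := (contDiff_succ_iff_deriv.mp h2).2.2
  obtain ⟨hdiff2, hcont2⟩ := contDiff_one_iff_deriv.mp hC1
  have hdiff1 : Differentiable ℝ v := hv.differentiable two_ne_zero
  have hcont1 : Continuous (deriv v) := hdiff2.continuous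
  have hcont0 : Continuous v := hdiff1.continuous
  -- integrability
  have hiv : ∀ a b : ℝ, IntervalIntegrable v volume a b := fun a b => hcont0.intervalIntegrable a b
  have hiav : ∀ a b : ℝ, IntervalIntegrable (fun x => |v x|) volume a b :=
    fun a b => hcont0.abs.intervalIntegrable a b
  have hi1 : ∀ a b : ℝ, IntervalIntegrable (deriv v) volume a b :=
    fun a b => hcont1.intervalIntegrable a b
  have hia1 : ∀ a b : ℝ, IntervalIntegrable (fun x => |deriv v x|) volume a b :=
    fun a b => hcont1.abs.intervalIntegrable a b
  have hi2 : ∀ a b : ℝ, IntervalIntegrable (deriv (deriv v)) volume a b :=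
    fun a b => hcont2.intervalIntegrable a b
  have hia2 : ∀ a b : ℝ, IntervalIntegrable (fun x => |deriv (deriv v) x|) volume a b :=
    fun a b => hcont2.abs.intervalIntegrable a b
  have hW : IntervalIntegrable (fun x => w x * |v x|) volume (-1) 1 := by
    apply ContinuousOn.intervalIntegrable
    rw [uIcc_of_le (by norm_num : (-1:ℝ) ≤ 1)]
    exact hw_cont.mul hcont0.abs.continuousOn
  obtain ⟨A2, hA2_def⟩ : ∃ a : ℝ, a = ∫ x in (-1:ℝ)..1, (deriv (deriv v) x) ^ 2 := ⟨_, rfl⟩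
  obtain ⟨B, hB_def⟩ : ∃ b : ℝ, b = ∫ x in (-1:ℝ)..1, w x * |v x| := ⟨_, rfl⟩
  obtain ⟨N, hN_def⟩ : ∃ n : ℝ, n = ∫ x in (-1:ℝ)..1, |deriv (deriv v) x| := ⟨_, rfl⟩
  rw [← hA2_def, ← hB_def]
  have hA2 : 0 ≤ A2 := hA2_def ▸ intervalIntegral.integral_nonneg (by norm_num)
    (fun u _ => sq_nonneg _)
  have hN0 : 0 ≤ N := hN_def ▸ intervalIntegral.integral_nonneg (by norm_num)
    (fun u _ => abs_nonneg _)
  have hB0 : 0 ≤ B := hB_def ▸ intervalIntegral.integral_nonneg (by norm_num)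
    (fun u hu => mul_nonneg (hw_nonneg u hu) (abs_nonneg _))
  -- N² ≤ 2 A2
  have hN2 : N^2 ≤ 2 * A2 := by
    have key : ∀ t : ℝ, 0 < t → N ≤ 1/t + (t/2) * A2 := by
      intro t ht
      have step : N ≤ ∫ x in (-1:ℝ)..1, (1/(2*t) + (t/2) * (deriv (deriv v) x)^2) := by
        rw [hN_def]
        apply intervalIntegral.integral_mono_on (by norm_num) (hia2 _ _)
        · exact ((continuous_const.add (continuous_const.mul (hcont2.pow 2))).intervalIntegrable _ _)
        · intro x _
          have h := sq_nonneg (t * |deriv (deriv v) x| - 1)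
          have h2 : |deriv (deriv v) x|^2 = (deriv (deriv v) x)^2 := sq_abs _
          rw [show (1:ℝ)/(2*t) + t/2 * (deriv (deriv v) x)^2
              = (1 + t^2*(deriv (deriv v) x)^2)/(2*t) by field_simp,
            le_div_iff₀ (by positivity)]
          nlinarith [h, h2]
      rw [intervalIntegral.integral_add (f := fun _ => 1/(2*t))
        (g := fun x => t/2 * deriv (deriv v) x ^ 2) (intervalIntegrable_const)
        ((continuous_const.mul (hcont2.pow 2)).intervalIntegrable _ _),
        intervalIntegral.integral_const, intervalIntegral.integral_const_mul, ← hA2_def] at step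
      have h1 : ((1:ℝ) - (-1)) • (1/(2*t)) = 1/t := by
        rw [smul_eq_mul, mul_one_div, div_eq_div_iff (by positivity) ht.ne']
        ring
      rw [h1] at step
      linarith
    rcases eq_or_lt_of_le hA2 with h0 | hpos
    · have hNle : N ≤ 0 := by
        by_contra h
        push_neg at h
        have hk := key (2/N) (by positivity)
        rw [← h0] at hk
        have e : (1:ℝ)/(2/N) = N/2 := by field_simp
        rw [e] at hk
        nlinarith
      have hN00 : N = 0 := le_antisymm hNle hN0
      rw [hN00, ← h0]
      norm_num
    · obtain ⟨s, hs_def⟩ : ∃ s : ℝ, s = Real.sqrt (2/A2) := ⟨_, rfl⟩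
      have hsp : 0 < s := hs_def ▸ Real.sqrt_pos.mpr (by positivity)
      have hk := key s hsp
      have hs : s^2 * A2 = 2 := by
        rw [hs_def, Real.sq_sqrt (by positivity : (0:ℝ) ≤ 2/A2), div_mul_cancel₀]
        exact hpos.ne'
      have e : 1/s = s*A2/2 := by
        rw [div_eq_div_iff hsp.ne' two_ne_zero]
        linear_combination -hs
      rw [e] at hk
      have hk2 : N ≤ s * A2 := by linarith
      have hmm := mul_le_mul hk2 hk2 hN0 (mul_nonneg hsp.le hA2)
      nlinarith [hmm, hs, hA2, hpos]
  -- FTC facts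
  have ftc1 : ∀ x ∈ Icc (-1:ℝ) 1, deriv v x = ∫ t in (-1:ℝ)..x, deriv (deriv v) t := by
    intro x hx
    rw [intervalIntegral.integral_deriv_eq_sub (fun y _ => hdiff2 y) (hi2 _ _), hd1, sub_zero]
  have hv'bd : ∀ x ∈ Icc (-1:ℝ) 1, |deriv v x| ≤ N := by
    intro x hx
    rw [ftc1 x hx]
    calc |∫ t in (-1:ℝ)..x, deriv (deriv v) t| ≤ ∫ t in (-1:ℝ)..x, |deriv (deriv v) t| :=
          intervalIntegral.abs_integral_le_integral_abs hx.1
      _ ≤ N := by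
          rw [hN_def, ← intervalIntegral.integral_add_adjacent_intervals (hia2 (-1) x) (hia2 x 1)]
          have h : 0 ≤ ∫ t in x..(1:ℝ), |deriv (deriv v) t| :=
            intervalIntegral.integral_nonneg hx.2 (fun u _ => abs_nonneg _)
          linarith
  have ftc0l : ∀ x ∈ Icc (-1:ℝ) 1, v x = ∫ t in (-1:ℝ)..x, deriv v t := by
    intro x hx
    rw [intervalIntegral.integral_deriv_eq_sub (fun y _ => hdiff1 y) (hi1 _ _), hv1, sub_zero]
  have ftc0r : ∀ x ∈ Icc (-1:ℝ) 1, v x = -∫ t in x..(1:ℝ), deriv v t := by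
    intro x hx
    rw [intervalIntegral.integral_deriv_eq_sub (fun y _ => hdiff1 y) (hi1 _ _), hv2, zero_sub,
      neg_neg]
  -- global sup bound on |v|
  have hvbd : ∀ x ∈ Icc (-1:ℝ) 1, |v x| ≤ 2 * N := by
    intro x hx
    rw [ftc0l x hx]
    calc |∫ t in (-1:ℝ)..x, deriv v t| ≤ ∫ t in (-1:ℝ)..x, |deriv v t| :=
          intervalIntegral.abs_integral_le_integral_abs hx.1
      _ ≤ ∫ t in (-1:ℝ)..x, N := by
          apply intervalIntegral.integral_mono_on hx.1 (hia1 _ _) intervalIntegrable_const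
          intro u hu
          exact hv'bd u ⟨hu.1, le_trans hu.2 hx.2⟩
      _ = (x - (-1)) * N := by rw [intervalIntegral.integral_const, smul_eq_mul]
      _ ≤ 2 * N := by nlinarith [hx.2, hN0]
  -- strip bounds
  have strip_left : (∫ x in (-1:ℝ)..(-1+η), |v x|) ≤ η^2 * N := by
    have hb : ∀ x ∈ Icc (-1:ℝ) (-1+η), |v x| ≤ η * N := by
      intro x hx
      have hxI : x ∈ Icc (-1:ℝ) 1 := ⟨hx.1, by linarith [hx.2]⟩
      rw [ftc0l x hxI]
      calc |∫ t in (-1:ℝ)..x, deriv v t| ≤ ∫ t in (-1:ℝ)..x, |deriv v t| :=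
            intervalIntegral.abs_integral_le_integral_abs hx.1
        _ ≤ ∫ t in (-1:ℝ)..x, N := by
            apply intervalIntegral.integral_mono_on hx.1 (hia1 _ _) intervalIntegrable_const
            intro u hu
            exact hv'bd u ⟨hu.1, by linarith [hu.2, hx.2]⟩
        _ = (x - (-1)) * N := by rw [intervalIntegral.integral_const, smul_eq_mul]
        _ ≤ η * N := by nlinarith [hx.2, hN0]
    calc (∫ x in (-1:ℝ)..(-1+η), |v x|) ≤ ∫ x in (-1:ℝ)..(-1+η), η*N := by
          apply intervalIntegral.integral_mono_on (by linarith) (hiav _ _)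
            intervalIntegrable_const hb
      _ = ((-1+η) - (-1)) * (η*N) := by rw [intervalIntegral.integral_const, smul_eq_mul]
      _ = η^2 * N := by ring
  have strip_right : (∫ x in (1-η:ℝ)..1, |v x|) ≤ η^2 * N := by
    have hb : ∀ x ∈ Icc (1-η:ℝ) 1, |v x| ≤ η * N := by
      intro x hx
      have hxI : x ∈ Icc (-1:ℝ) 1 := ⟨by linarith [hx.1], hx.2⟩
      rw [ftc0r x hxI, abs_neg]
      calc |∫ t in x..(1:ℝ), deriv v t| ≤ ∫ t in x..(1:ℝ), |deriv v t| :=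
            intervalIntegral.abs_integral_le_integral_abs hx.2
        _ ≤ ∫ t in x..(1:ℝ), N := by
            apply intervalIntegral.integral_mono_on hx.2 (hia1 _ _) intervalIntegrable_const
            intro u hu
            exact hv'bd u ⟨by linarith [hu.1, hxI.1], hu.2⟩
        _ = (1 - x) * N := by rw [intervalIntegral.integral_const, smul_eq_mul]
        _ ≤ η * N := by nlinarith [hx.1, hN0]
    calc (∫ x in (1-η:ℝ)..1, |v x|) ≤ ∫ x in (1-η:ℝ)..1, η*N := by
          apply intervalIntegral.integral_mono_on (by linarith) (hiav _ _)
            intervalIntegrable_const hb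
      _ = (1 - (1-η)) * (η*N) := by rw [intervalIntegral.integral_const, smul_eq_mul]
      _ = η^2 * N := by ring
  -- middle bound via w
  have hWsub : ∀ a b : ℝ, -1 ≤ a → a ≤ b → b ≤ 1 →
      IntervalIntegrable (fun x => w x * |v x|) volume a b := by
    intro a b ha hab hb
    apply hW.mono_set
    rw [uIcc_of_le hab, uIcc_of_le (by norm_num : (-1:ℝ) ≤ 1)]
    exact Icc_subset_Icc ha hb
  have mid : (∫ x in (-1+η:ℝ)..(1-η), |v x|) ≤ B / c := by
    have h1 : c * (∫ x in (-1+η:ℝ)..(1-η), |v x|) ≤ ∫ x in (-1+η:ℝ)..(1-η), w x * |v x| := by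
      rw [← intervalIntegral.integral_const_mul]
      apply intervalIntegral.integral_mono_on hne
        ((continuous_const.mul hcont0.abs).intervalIntegrable _ _)
        (hWsub _ _ (by linarith) hne (by linarith))
      intro x hx
      exact mul_le_mul_of_nonneg_right (hmin x hx) (abs_nonneg _)
    have h2 : (∫ x in (-1+η:ℝ)..(1-η), w x * |v x|) ≤ B := by
      rw [hB_def,
        ← intervalIntegral.integral_add_adjacent_intervals
          (hWsub (-1) (-1+η) le_rfl (by linarith) (by linarith)) (hWsub (-1+η) 1 (by linarith) (by linarith) le_rfl),
        ← intervalIntegral.integral_add_adjacent_intervals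
          (hWsub (-1+η) (1-η) (by linarith) hne (by linarith)) (hWsub (1-η) 1 (by linarith) (by linarith) le_rfl)]
      have n1 : 0 ≤ ∫ x in (-1:ℝ)..(-1+η), w x * |v x| :=
        intervalIntegral.integral_nonneg (by linarith)
          (fun u hu => mul_nonneg (hw_nonneg u ⟨hu.1, by linarith [hu.2]⟩) (abs_nonneg _))
      have n2 : 0 ≤ ∫ x in (1-η:ℝ)..1, w x * |v x| :=
        intervalIntegral.integral_nonneg (by linarith)
          (fun u hu => mul_nonneg (hw_nonneg u ⟨by linarith [hu.1], hu.2⟩) (abs_nonneg _))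
      linarith
    rw [le_div_iff₀ hc]
    nlinarith [h1, h2]
  -- total L1 bound
  have hL1 : (∫ x in (-1:ℝ)..1, |v x|) ≤ B/c + 2*η^2*N := by
    rw [← intervalIntegral.integral_add_adjacent_intervals (hiav (-1) (-1+η)) (hiav (-1+η) 1),
      ← intervalIntegral.integral_add_adjacent_intervals (hiav (-1+η) (1-η)) (hiav (1-η) 1)]
    linarith [strip_left, strip_right, mid]
  -- L2 bound for v
  have hL2 : (∫ x in (-1:ℝ)..1, (v x)^2) ≤ 2*N*(B/c + 2*η^2*N) := by
    have step : (∫ x in (-1:ℝ)..1, (v x)^2) ≤ ∫ x in (-1:ℝ)..1, 2*N*|v x| := by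
      apply intervalIntegral.integral_mono_on (by norm_num)
        ((hcont0.pow 2).intervalIntegrable _ _)
        ((continuous_const.mul hcont0.abs).intervalIntegrable _ _)
      intro x hx
      show (v x)^2 ≤ 2*N*|v x|
      nlinarith [hvbd x hx, abs_nonneg (v x), sq_abs (v x)]
    rw [intervalIntegral.integral_const_mul] at step
    have h2 := mul_le_mul_of_nonneg_left hL1 (by linarith [hN0] : (0:ℝ) ≤ 2*N)
    linarith
  -- integration by parts
  have ibp : (∫ x in (-1:ℝ)..1, (deriv v x)^2) = -∫ x in (-1:ℝ)..1, v x * deriv (deriv v) x := by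
    have h := intervalIntegral.integral_mul_deriv_eq_deriv_mul (a := (-1:ℝ)) (b := 1)
      (u := v) (v := deriv v) (u' := deriv v) (v' := deriv (deriv v))
      (fun x _ => (hdiff1 x).hasDerivAt) (fun x _ => (hdiff2 x).hasDerivAt)
      (hi1 _ _) (hi2 _ _)
    rw [hv2, hd2, hv1, hd1] at h
    simp only [mul_zero, sub_zero, zero_sub] at h
    rw [show (∫ x in (-1:ℝ)..1, (deriv v x)^2) = ∫ x in (-1:ℝ)..1, deriv v x * deriv v x by
      apply intervalIntegral.integral_congr; intro x _; simp [sq]]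
    linarith [h]
  -- main energy estimate
  have main : (∫ x in (-1:ℝ)..1, (deriv v x)^2)
      ≤ (1/(2*δ)) * (∫ x in (-1:ℝ)..1, (v x)^2) + (δ/2) * A2 := by
    rw [ibp]
    have h1 : -(∫ x in (-1:ℝ)..1, v x * deriv (deriv v) x)
        ≤ ∫ x in (-1:ℝ)..1, ((1/(2*δ)) * (v x)^2 + (δ/2) * (deriv (deriv v) x)^2) := by
      rw [← intervalIntegral.integral_neg]
      apply intervalIntegral.integral_mono_on (by norm_num)
        ((hcont0.mul hcont2).neg.intervalIntegrable _ _)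
        (((continuous_const.mul (hcont0.pow 2)).add
          (continuous_const.mul (hcont2.pow 2))).intervalIntegrable _ _)
      intro x _
      have hy := sq_nonneg (v x + δ * deriv (deriv v) x)
      show -(v x * deriv (deriv v) x) ≤ 1/(2*δ) * (v x)^2 + δ/2 * (deriv (deriv v) x)^2
      rw [show (1:ℝ)/(2*δ) * (v x)^2 + δ/2 * (deriv (deriv v) x)^2
          = ((v x)^2 + δ^2*(deriv (deriv v) x)^2)/(2*δ) by field_simp,
        le_div_iff₀ (by positivity)]
      nlinarith [hy]
    rw [intervalIntegral.integral_add (f := fun x => 1/(2*δ) * v x ^ 2)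
      (g := fun x => δ/2 * deriv (deriv v) x ^ 2)
      ((continuous_const.mul (hcont0.pow 2)).intervalIntegrable _ _)
      ((continuous_const.mul (hcont2.pow 2)).intervalIntegrable _ _),
      intervalIntegral.integral_const_mul, intervalIntegral.integral_const_mul, ← hA2_def] at h1
    exact h1
  -- final assembly
  have hI2 : (∫ x in (-1:ℝ)..1, (v x)^2) ≤ 2*N*B/c + 4*η^2*N^2 := by
    have e : 2*N*(B/c + 2*η^2*N) = 2*N*B/c + 4*η^2*N^2 := by ring
    linarith [hL2, e ▸ hL2]
  have h16 : 16*η^2 ≤ δ^2 := by nlinarith [hη2, hη0]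
  have hT2 : 2*η^2*N^2/δ ≤ (δ/4)*A2 := by
    rw [div_le_iff₀ hδ]
    have p1 : 2*η^2*N^2 ≤ 4*η^2*A2 := by
      nlinarith [mul_le_mul_of_nonneg_left hN2 (by positivity : (0:ℝ) ≤ 2*η^2)]
    have p2 : 4*η^2*A2 ≤ (δ^2/4)*A2 := by
      nlinarith [mul_le_mul_of_nonneg_right h16 (by linarith [hA2] : (0:ℝ) ≤ A2/4)]
    nlinarith [p1, p2]
  have hT1 : N*B/(δ*c) ≤ (δ/4)*A2 + 2/(δ^3*c^2)*B^2 := by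
    have k2 := sq_nonneg (N - (4/(δ^2*c))*B)
    have k1 : (δ/8)*N^2 ≤ (δ/4)*A2 := by nlinarith [hN2, hδ]
    have key2 : (δ/8)*N^2 + 2/(δ^3*c^2)*B^2 - N*B/(δ*c) = (δ/8)*(N - (4/(δ^2*c))*B)^2 := by
      field_simp
      ring
    have k3 : 0 ≤ (δ/8)*(N - (4/(δ^2*c))*B)^2 := mul_nonneg (by linarith) k2
    linarith [key2, k3, k1]
  calc (∫ x in (-1:ℝ)..1, (deriv v x)^2)
      ≤ (1/(2*δ)) * (∫ x in (-1:ℝ)..1, (v x)^2) + (δ/2) * A2 := main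
    _ ≤ (1/(2*δ)) * (2*N*B/c + 4*η^2*N^2) + (δ/2) * A2 := by
        have := mul_le_mul_of_nonneg_left hI2 (by positivity : (0:ℝ) ≤ 1/(2*δ))
        linarith
    _ = N*B/(δ*c) + 2*η^2*N^2/δ + (δ/2)*A2 := by
        field_simp
        ring
    _ ≤ ((δ/4)*A2 + 2/(δ^3*c^2)*B^2) + (δ/4)*A2 + (δ/2)*A2 := by linarith [hT1, hT2]
    _ ≤ δ * A2 + 2/(δ^3*c^2) * B^2 := by linarith
end

section
/- Let β > 0, τ ≥ 0, λ > 0, T ∈ (0,∞], and let (ζ₁, μ₁) be a principal eigenpair of the clamped operator β∂x⁴ − τ∂x² on (-1,1). Let u : [0,T) × [-1,1] → ℝ be such that the partial derivatives ∂t u and ∂x^k u for k = 1,…,4 exist and are jointly continuous, u(t,±1) = ∂x u(t,±1) = 0 for all t, u(t,x) > -1 for all (t,x), and ∂t u + β ∂x⁴ u − τ ∂x² u = − λ G on [0,T) × (-1,1), where G : [0,T) × (-1,1) → ℝ is continuous and nonnegative. Then for all t ∈ [0,T): ∫_{-1}^{1} ζ₁(x) |u(t,x)| dx ≤ 2 +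 ∫_{-1}^{1} ζ₁(x) u(t,x) dx ≤ 2 + ( ∫_{-1}^{1} ζ₁(x) u(0,x) dx ) e^{−μ₁ t}. -/
open MeasureTheory Set
open scoped ENNReal

/-- A principal eigenpair `(ζ, μ)` of the clamped operator `β ∂x⁴ - τ ∂x²` on `(-1,1)`:
`μ > 0` and `ζ` is a C⁴ function with clamped boundary conditions, positive on `(-1,1)`,
normalized in `L¹`, satisfying `β ζ'''' - τ ζ'' = μ ζ`. -/
def IsPrincipalEigenpair (β τ : ℝ) (ζ : ℝ → ℝ) (μ : ℝ) : Prop :=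
  0 < μ ∧ ContDiff ℝ 4 ζ ∧
    ζ (-1) = 0 ∧ ζ 1 = 0 ∧ deriv ζ (-1) = 0 ∧ deriv ζ 1 = 0 ∧
    (∀ x ∈ Ioo (-1 : ℝ) 1, 0 < ζ x) ∧
    (∫ x in (-1 : ℝ)..1, ζ x) = 1 ∧
    ∀ x ∈ Ioo (-1 : ℝ) 1,
      β * iteratedDeriv 4 ζ x - τ * iteratedDeriv 2 ζ x = μ * ζ x

open Metric

lemma my_ibp (f g : ℝ → ℝ) (hf : ContDiff ℝ 1 f) (hg : ContDiff ℝ 1 g)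
    (h1 : f 1 * g 1 = 0) (h2 : f (-1) * g (-1) = 0) :
    (∫ x in (-1:ℝ)..1, f x * deriv g x) = - ∫ x in (-1:ℝ)..1, deriv f x * g x := by
  have := intervalIntegral.integral_mul_deriv_eq_deriv_mul
    (u := f) (v := g) (u' := deriv f) (v' := deriv g) (a := (-1:ℝ)) (b := 1)
    (fun x _ => (hf.differentiable one_ne_zero x).hasDerivAt)
    (fun x _ => (hg.differentiable one_ne_zero x).hasDerivAt)
    ((hf.continuous_deriv le_rfl).intervalIntegrable _ _)
    ((hg.continuous_deriv le_rfl).intervalIntegrable _ _)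
  rw [this, h1, h2]; ring

lemma cd_drop (f : ℝ → ℝ) (n : ℕ) (hf : ContDiff ℝ (n+1) f) : ContDiff ℝ n (deriv f) :=
  (contDiff_succ_iff_deriv.mp hf).2.2

lemma my_ibp2 (f g : ℝ → ℝ) (hf : ContDiff ℝ 4 f) (hg : ContDiff ℝ 4 g)
    (hf0 : f (-1) = 0) (hf1 : f 1 = 0) (hf0' : deriv f (-1) = 0) (hf1' : deriv f 1 = 0) :
    (∫ x in (-1:ℝ)..1, f x * iteratedDeriv 2 g x)
      = ∫ x in (-1:ℝ)..1, iteratedDeriv 2 f x * g x := by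
  have hgd : ContDiff ℝ 3 (deriv g) := cd_drop g 3 hg
  have hfd : ContDiff ℝ 3 (deriv f) := cd_drop f 3 hf
  have h2 : iteratedDeriv 2 g = deriv (deriv g) := by
    rw [iteratedDeriv_succ, iteratedDeriv_one]
  have h2f : iteratedDeriv 2 f = deriv (deriv f) := by
    rw [iteratedDeriv_succ, iteratedDeriv_one]
  rw [h2, h2f,
    my_ibp f (deriv g) (hf.of_le (by norm_num)) (hgd.of_le (by norm_num))
      (by rw [hf1]; ring) (by rw [hf0]; ring),
    my_ibp (deriv f) g (hfd.of_le (by norm_num)) (hg.of_le (by norm_num))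
      (by rw [hf1']; ring) (by rw [hf0']; ring)]
  ring

lemma my_ibp4 (f g : ℝ → ℝ) (hf : ContDiff ℝ 4 f) (hg : ContDiff ℝ 4 g)
    (hf0 : f (-1) = 0) (hf1 : f 1 = 0) (hf0' : deriv f (-1) = 0) (hf1' : deriv f 1 = 0)
    (hg0 : g (-1) = 0) (hg1 : g 1 = 0) (hg0' : deriv g (-1) = 0) (hg1' : deriv g 1 = 0) :
    (∫ x in (-1:ℝ)..1, f x * iteratedDeriv 4 g x)
      = ∫ x in (-1:ℝ)..1, iteratedDeriv 4 f x * g x := by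
  have hfd1 : ContDiff ℝ 3 (deriv f) := cd_drop f 3 hf
  have hfd2 : ContDiff ℝ 2 (deriv (deriv f)) := cd_drop _ 2 hfd1
  have hfd3 : ContDiff ℝ 1 (deriv (deriv (deriv f))) := cd_drop _ 1 hfd2
  have hgd1 : ContDiff ℝ 3 (deriv g) := cd_drop g 3 hg
  have hgd2 : ContDiff ℝ 2 (deriv (deriv g)) := cd_drop _ 2 hgd1
  have hgd3 : ContDiff ℝ 1 (deriv (deriv (deriv g))) := cd_drop _ 1 hgd2
  have e2 : ∀ h : ℝ → ℝ, iteratedDeriv 2 h = deriv (deriv h) := fun h => by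
    rw [iteratedDeriv_succ, iteratedDeriv_one]
  have e3 : ∀ h : ℝ → ℝ, iteratedDeriv 3 h = deriv (deriv (deriv h)) := fun h => by
    rw [iteratedDeriv_succ, e2]
  have e4 : ∀ h : ℝ → ℝ, iteratedDeriv 4 h = deriv (deriv (deriv (deriv h))) := fun h => by
    rw [iteratedDeriv_succ, e3]
  rw [e4, e4]
  rw [my_ibp f (deriv (deriv (deriv g))) (hf.of_le (by norm_num)) hgd3
      (by rw [hf1]; ring) (by rw [hf0]; ring)]
  rw [my_ibp (deriv f) (deriv (deriv g)) (hfd1.of_le (by norm_num)) (hgd2.of_le (by norm_num))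
      (by rw [hf1']; ring) (by rw [hf0']; ring)]
  rw [my_ibp (deriv (deriv f)) (deriv g) (hfd2.of_le (by norm_num)) (hgd1.of_le (by norm_num))
      (by rw [hg1']; ring) (by rw [hg0']; ring)]
  rw [my_ibp (deriv (deriv (deriv f))) g hfd3 (hg.of_le (by norm_num))
      (by rw [hg1]; ring) (by rw [hg0]; ring)]
  ring

lemma deriv_under (ζ : ℝ → ℝ) (hζ : Continuous ζ) (u : ℝ → ℝ → ℝ)
    (hu_t : ∀ x : ℝ, Differentiable ℝ fun s => u s x)
    (hux : ∀ t : ℝ, Continuous (u t))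
    (hu_t_cont : Continuous fun p : ℝ × ℝ => deriv (fun s => u s p.2) p.1) (t₀ : ℝ) :
    HasDerivAt (fun t => ∫ x in (-1:ℝ)..1, ζ x * u t x)
      (∫ x in (-1:ℝ)..1, ζ x * deriv (fun s => u s x) t₀) t₀ := by
  have hcont : Continuous fun p : ℝ × ℝ => ζ p.2 * deriv (fun s => u s p.2) p.1 :=
    (hζ.comp continuous_snd).mul hu_t_cont
  obtain ⟨C, hC⟩ := (((isCompact_Icc (a := t₀ - 1) (b := t₀ + 1)).prod
    (isCompact_Icc (a := (-1:ℝ)) (b := 1)))).exists_bound_of_continuousOn hcont.continuousOn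
  have key := intervalIntegral.hasDerivAt_integral_of_dominated_loc_of_deriv_le
    (F := fun t x => ζ x * u t x) (F' := fun t x => ζ x * deriv (fun s => u s x) t)
    (x₀ := t₀) (a := (-1:ℝ)) (b := 1) (μ := volume) (bound := fun _ => C)
    (s := ball t₀ 1) (ball_mem_nhds t₀ one_pos)
    (Filter.Eventually.of_forall fun t => ((hζ.mul (hux t)).aestronglyMeasurable).restrict)
    ((hζ.mul (hux t₀)).intervalIntegrable _ _)
    (((hζ.mul (hu_t_cont.comp (continuous_const.prodMk continuous_id)))).aestronglyMeasurable.restrict)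
    ?_ (intervalIntegrable_const) ?_
  · exact key.2
  · refine Filter.Eventually.of_forall fun x hx t ht => ?_
    refine hC (t, x) ⟨?_, ?_⟩
    · rw [mem_ball, Real.dist_eq] at ht
      constructor <;> [linarith [abs_lt.mp ht] ; linarith [abs_lt.mp ht]]
    · rw [Set.uIoc_of_le (by norm_num : (-1:ℝ) ≤ 1)] at hx
      exact ⟨le_of_lt hx.1, hx.2⟩
  · refine Filter.Eventually.of_forall fun x _ t _ => ?_
    exact ((hu_t x) t).hasDerivAt.const_mul (ζ x)

/-- Weighted L¹ bound for the parabolic (γ = 0) clamped problem with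
nonpositive right-hand side `-λ G`. -/
theorem stmt_2
    (β τ lam : ℝ) (hβ : 0 < β) (hτ : 0 ≤ τ) (hlam : 0 < lam)
    (ζ₁ : ℝ → ℝ) (μ₁ : ℝ) (heig : IsPrincipalEigenpair β τ ζ₁ μ₁)
    (T : ℝ≥0∞) (hT : 0 < T)
    (u G : ℝ → ℝ → ℝ)
    -- existence of ∂t u and of ∂x^k u, k ≤ 4
    (hu_t : ∀ x : ℝ, Differentiable ℝ fun s => u s x)
    (hu_x : ∀ t : ℝ, ContDiff ℝ 4 (u t))
    -- joint continuity of ∂t u and of ∂x^k u, k ≤ 4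
    (hu_t_cont : Continuous fun p : ℝ × ℝ => deriv (fun s => u s p.2) p.1)
    (hu_x_cont : ∀ k ≤ 4, Continuous fun p : ℝ × ℝ => iteratedDeriv k (u p.1) p.2)
    -- clamped boundary conditions
    (hbc : ∀ t : ℝ, 0 ≤ t → ENNReal.ofReal t < T →
      u t (-1) = 0 ∧ u t 1 = 0 ∧ deriv (u t) (-1) = 0 ∧ deriv (u t) 1 = 0)
    -- u stays above -1
    (hu_gt : ∀ t : ℝ, 0 ≤ t → ENNReal.ofReal t < T → ∀ x ∈ Icc (-1 : ℝ) 1, -1 < u t x)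
    -- G continuous and nonnegative
    (hG_cont : Continuous fun p : ℝ × ℝ => G p.1 p.2)
    (hG_nonneg : ∀ t : ℝ, 0 ≤ t → ENNReal.ofReal t < T → ∀ x ∈ Ioo (-1 : ℝ) 1, 0 ≤ G t x)
    -- the evolution equation ∂t u + β ∂x⁴ u - τ ∂x² u = -λ G
    (hpde : ∀ t : ℝ, 0 ≤ t → ENNReal.ofReal t < T → ∀ x ∈ Ioo (-1 : ℝ) 1,
      deriv (fun s => u s x) t + β * iteratedDeriv 4 (u t) x
        - τ * iteratedDeriv 2 (u t) x = - lam * G t x) :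
    ∀ t : ℝ, 0 ≤ t → ENNReal.ofReal t < T →
      (∫ x in (-1 : ℝ)..1, ζ₁ x * |u t x|) ≤ 2 + (∫ x in (-1 : ℝ)..1, ζ₁ x * u t x) ∧
      2 + (∫ x in (-1 : ℝ)..1, ζ₁ x * u t x) ≤
        2 + (∫ x in (-1 : ℝ)..1, ζ₁ x * u 0 x) * Real.exp (-μ₁ * t) := by
  obtain ⟨hμ, hζ4, hζm1, hζ1, hζ'm1, hζ'1, hζpos, hζint, hζeig⟩ := heig
  have hζc : Continuous ζ₁ := hζ4.continuous
  have hζnn : ∀ x ∈ Icc (-1:ℝ) 1, 0 ≤ ζ₁ x := by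
    intro x hx
    rcases eq_or_lt_of_le hx.1 with h | h
    · simp [← h, hζm1]
    rcases eq_or_lt_of_le hx.2 with h' | h'
    · simp [h', hζ1]
    exact (hζpos x ⟨h, h'⟩).le
  have hux : ∀ t, Continuous (u t) := fun t => (hu_x t).continuous
  set E : ℝ → ℝ := fun t => ∫ x in (-1:ℝ)..1, ζ₁ x * u t x with hEdef
  have hE' : ∀ t : ℝ, HasDerivAt E (∫ x in (-1:ℝ)..1, ζ₁ x * deriv (fun s => u s x) t) t :=
    fun t => deriv_under ζ₁ hζc u hu_t hux hu_t_cont t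
  -- a.e. x ≠ 1
  have hne : ∀ᵐ x : ℝ, x ≠ (1:ℝ) := by
    have : volume ({(1:ℝ)} : Set ℝ) = 0 := Real.volume_singleton
    rw [MeasureTheory.ae_iff]
    simpa using this
  -- key differential inequality
  have key : ∀ t : ℝ, 0 ≤ t → ENNReal.ofReal t < T →
      (∫ x in (-1:ℝ)..1, ζ₁ x * deriv (fun s => u s x) t) ≤ -μ₁ * E t := by
    intro t ht0 htT
    obtain ⟨hb0, hb1, hb0', hb1'⟩ := hbc t ht0 htT
    have hGt : Continuous (G t) := hG_cont.comp (continuous_const.prodMk continuous_id)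
    have hu4 : Continuous (iteratedDeriv 4 (u t)) :=
      (hu_x t).continuous_iteratedDeriv 4 (by norm_num)
    have hu2 : Continuous (iteratedDeriv 2 (u t)) :=
      (hu_x t).continuous_iteratedDeriv 2 (by norm_num)
    have i1 : IntervalIntegrable (fun x => ζ₁ x * G t x) volume (-1) 1 :=
      (hζc.mul hGt).intervalIntegrable _ _
    have i4 : IntervalIntegrable (fun x => ζ₁ x * iteratedDeriv 4 (u t) x) volume (-1) 1 :=
      (hζc.mul hu4).intervalIntegrable _ _
    have i2 : IntervalIntegrable (fun x => ζ₁ x * iteratedDeriv 2 (u t) x) volume (-1) 1 :=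
      (hζc.mul hu2).intervalIntegrable _ _
    have e1 : (∫ x in (-1:ℝ)..1, ζ₁ x * deriv (fun s => u s x) t)
        = ∫ x in (-1:ℝ)..1, ((-lam) * (ζ₁ x * G t x)
            + ((-β) * (ζ₁ x * iteratedDeriv 4 (u t) x)
              + τ * (ζ₁ x * iteratedDeriv 2 (u t) x))) := by
      apply intervalIntegral.integral_congr_ae
      filter_upwards [hne] with x hx hmem
      rw [Set.uIoc_of_le (by norm_num : (-1:ℝ) ≤ 1)] at hmem
      have hxIoo : x ∈ Ioo (-1:ℝ) 1 := ⟨hmem.1, lt_of_le_of_ne hmem.2 hx⟩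
      have hp := hpde t ht0 htT x hxIoo
      have hd : deriv (fun s => u s x) t
          = - lam * G t x - β * iteratedDeriv 4 (u t) x + τ * iteratedDeriv 2 (u t) x := by
        linarith
      rw [hd]; ring
    have e2 : (∫ x in (-1:ℝ)..1, ((-lam) * (ζ₁ x * G t x)
            + ((-β) * (ζ₁ x * iteratedDeriv 4 (u t) x)
              + τ * (ζ₁ x * iteratedDeriv 2 (u t) x))))
        = (-lam) * (∫ x in (-1:ℝ)..1, ζ₁ x * G t x)
          + ((-β) * (∫ x in (-1:ℝ)..1, ζ₁ x * iteratedDeriv 4 (u t) x)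
            + τ * (∫ x in (-1:ℝ)..1, ζ₁ x * iteratedDeriv 2 (u t) x)) := by
      rw [intervalIntegral.integral_add (i1.const_mul _)
        ((i4.const_mul _).add (i2.const_mul _)),
        intervalIntegral.integral_add (i4.const_mul _) (i2.const_mul _),
        intervalIntegral.integral_const_mul, intervalIntegral.integral_const_mul,
        intervalIntegral.integral_const_mul]
    have e4 : (∫ x in (-1:ℝ)..1, ζ₁ x * iteratedDeriv 4 (u t) x)
        = ∫ x in (-1:ℝ)..1, iteratedDeriv 4 ζ₁ x * u t x :=
      my_ibp4 ζ₁ (u t) hζ4 (hu_x t) hζm1 hζ1 hζ'm1 hζ'1 hb0 hb1 hb0' hb1'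
    have e5 : (∫ x in (-1:ℝ)..1, ζ₁ x * iteratedDeriv 2 (u t) x)
        = ∫ x in (-1:ℝ)..1, iteratedDeriv 2 ζ₁ x * u t x :=
      my_ibp2 ζ₁ (u t) hζ4 (hu_x t) hζm1 hζ1 hζ'm1 hζ'1
    -- combine eigen equation
    have hζ4c : Continuous (iteratedDeriv 4 ζ₁) := hζ4.continuous_iteratedDeriv 4 (by norm_num)
    have hζ2c : Continuous (iteratedDeriv 2 ζ₁) := hζ4.continuous_iteratedDeriv 2 (by norm_num)
    have e6 : (-β) * (∫ x in (-1:ℝ)..1, iteratedDeriv 4 ζ₁ x * u t x)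
          + τ * (∫ x in (-1:ℝ)..1, iteratedDeriv 2 ζ₁ x * u t x)
        = -μ₁ * E t := by
      have j4 : IntervalIntegrable (fun x => iteratedDeriv 4 ζ₁ x * u t x) volume (-1) 1 :=
        (hζ4c.mul (hux t)).intervalIntegrable _ _
      have j2 : IntervalIntegrable (fun x => iteratedDeriv 2 ζ₁ x * u t x) volume (-1) 1 :=
        (hζ2c.mul (hux t)).intervalIntegrable _ _
      have hsum : (∫ x in (-1:ℝ)..1, ((-β) * (iteratedDeriv 4 ζ₁ x * u t x)
            + τ * (iteratedDeriv 2 ζ₁ x * u t x)))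
          = ∫ x in (-1:ℝ)..1, (-μ₁) * (ζ₁ x * u t x) := by
        apply intervalIntegral.integral_congr_ae
        filter_upwards [hne] with x hx hmem
        rw [Set.uIoc_of_le (by norm_num : (-1:ℝ) ≤ 1)] at hmem
        have hxIoo : x ∈ Ioo (-1:ℝ) 1 := ⟨hmem.1, lt_of_le_of_ne hmem.2 hx⟩
        have he := hζeig x hxIoo
        linear_combination (- u t x) * he
      have lhs : (∫ x in (-1:ℝ)..1, ((-β) * (iteratedDeriv 4 ζ₁ x * u t x)
            + τ * (iteratedDeriv 2 ζ₁ x * u t x)))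
          = (-β) * (∫ x in (-1:ℝ)..1, iteratedDeriv 4 ζ₁ x * u t x)
            + τ * (∫ x in (-1:ℝ)..1, iteratedDeriv 2 ζ₁ x * u t x) := by
        rw [intervalIntegral.integral_add (j4.const_mul _) (j2.const_mul _),
          intervalIntegral.integral_const_mul, intervalIntegral.integral_const_mul]
      rw [← lhs, hsum, intervalIntegral.integral_const_mul, hEdef]
    have hGnn : 0 ≤ ∫ x in (-1:ℝ)..1, ζ₁ x * G t x := by
      apply intervalIntegral.integral_nonneg (by norm_num : (-1:ℝ) ≤ 1)
      intro x hx
      rcases eq_or_lt_of_le hx.1 with h | h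
      · simp [← h, hζm1]
      rcases eq_or_lt_of_le hx.2 with h' | h'
      · simp [h', hζ1]
      exact mul_nonneg (hζpos x ⟨h, h'⟩).le (hG_nonneg t ht0 htT x ⟨h, h'⟩)
    rw [e1, e2, e4, e5, e6]
    nlinarith [hGnn]
  -- Gronwall part
  intro t ht0 htT
  constructor
  · -- part 1
    have habs : (∫ x in (-1:ℝ)..1, ζ₁ x * |u t x|)
        ≤ ∫ x in (-1:ℝ)..1, (ζ₁ x * u t x + 2 * ζ₁ x) := by
      apply intervalIntegral.integral_mono_on (by norm_num : (-1:ℝ) ≤ 1)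
        ((hζc.mul (hux t).abs).intervalIntegrable _ _)
        (((hζc.mul (hux t)).add (continuous_const.mul hζc)).intervalIntegrable _ _)
      intro x hx
      show ζ₁ x * |u t x| ≤ ζ₁ x * u t x + 2 * ζ₁ x
      have h1 : |u t x| ≤ u t x + 2 := by
        have := hu_gt t ht0 htT x hx
        rcases abs_cases (u t x) with ⟨h, _⟩ | ⟨h, _⟩ <;> linarith
      have h2 := hζnn x hx
      nlinarith
    have hsplit : (∫ x in (-1:ℝ)..1, (ζ₁ x * u t x + 2 * ζ₁ x))
        = (∫ x in (-1:ℝ)..1, ζ₁ x * u t x) + 2 := by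
      rw [intervalIntegral.integral_add (f := fun x => ζ₁ x * u t x) (g := fun x => 2 * ζ₁ x) ((hζc.mul (hux t)).intervalIntegrable _ _)
        ((continuous_const.mul hζc).intervalIntegrable _ _),
        intervalIntegral.integral_const_mul, hζint]
      ring
    rw [hsplit] at habs
    linarith
  · -- part 2 : Gronwall
    have hGr : E t ≤ E 0 * Real.exp (-μ₁ * t) := by
      set F : ℝ → ℝ := fun s => E s * Real.exp (μ₁ * s) with hFdef
      have hF : ∀ s : ℝ, HasDerivAt F
          ((∫ x in (-1:ℝ)..1, ζ₁ x * deriv (fun r => u r x) s) * Real.exp (μ₁ * s)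
            + E s * (Real.exp (μ₁ * s) * μ₁)) s := by
        intro s
        have hexp' : HasDerivAt (fun r : ℝ => Real.exp (μ₁ * r)) (Real.exp (μ₁ * s) * μ₁) s := by
          simpa using ((hasDerivAt_id s).const_mul μ₁).exp
        exact (hE' s).mul hexp'
      have hFdiff : Differentiable ℝ F := fun s => (hF s).differentiableAt
      have hanti : AntitoneOn F (Icc 0 t) := by
        apply antitoneOn_of_deriv_nonpos (convex_Icc 0 t) hFdiff.continuous.continuousOn
          (hFdiff.differentiableOn.mono interior_subset)
        intro s hs
        rw [interior_Icc] at hs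
        have hs0 : 0 ≤ s := hs.1.le
        have hsT : ENNReal.ofReal s < T :=
          lt_of_le_of_lt (ENNReal.ofReal_le_ofReal hs.2.le) htT
        have hk := key s hs0 hsT
        rw [(hF s).deriv]
        have hexp := Real.exp_pos (μ₁ * s)
        nlinarith
      have hFt : F t ≤ F 0 := hanti (left_mem_Icc.mpr ht0) ⟨ht0, le_refl t⟩ ht0
      have h0 : F 0 = E 0 := by simp [hFdef]
      have hexp := Real.exp_pos (μ₁ * t)
      rw [h0] at hFt
      have : E t ≤ E 0 / Real.exp (μ₁ * t) := by
        rw [le_div_iff₀ hexp]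
        simpa [hFdef] using hFt
      calc E t ≤ E 0 / Real.exp (μ₁ * t) := this
        _ = E 0 * Real.exp (-μ₁ * t) := by
            rw [neg_mul, Real.exp_neg, div_eq_mul_inv]
    linarith [hGr]
end

section
/- Let u : [-1,1] → ℝ be continuous with u > -1 on (-1,1) and u(±1) = 0, and let w : [-1,1] → ℝ be continuous and nonnegative. Let ψ be continuous on the closure of Ω(u), continuously differentiable in Ω(u) with ∂zψ extending continuously to the closure, and suppose ψ(x,-1) = 0 and ψ(x,u(x)) = 1 for all x ∈ (-1,1). Then ∫_{-1}^{1} w(x)/(1+u(x)) dx ≤ ∫_{Ω(u)} w(x) |∂z ψ(x,z)|² d(x,z) (an inequality in [0,∞]). -/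
open MeasureTheory Set
open scoped ENNReal

/-- The domain `Ω(u) = {(x,z) : -1 < x < 1, -1 < z < u(x)}`. -/
def Omega (u : ℝ → ℝ) : Set (ℝ × ℝ) :=
  {p | p.1 ∈ Ioo (-1 : ℝ) 1 ∧ p.2 ∈ Ioo (-1 : ℝ) (u p.1)}

/-- Partial derivative with respect to the second variable. -/
noncomputable def pdz (ψ : ℝ × ℝ → ℝ) (p : ℝ × ℝ) : ℝ :=
  deriv (fun z => ψ (p.1, z)) p.2

/-- Cauchy–Schwarz for interval integrals. -/
lemma cs_aux {f : ℝ → ℝ} {a b : ℝ} (hab : a < b) (hf : ContinuousOn f (Icc a b)) :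
    (∫ z in a..b, f z) ^ 2 ≤ (b - a) * ∫ z in a..b, (f z) ^ 2 := by
  have huIcc : uIcc a b = Icc a b := uIcc_of_le hab.le
  have hint : IntervalIntegrable f volume a b := (hf.mono (by rw [huIcc])).intervalIntegrable
  have hint2 : IntervalIntegrable (fun z => (f z) ^ 2) volume a b :=
    ((hf.pow 2).mono (by rw [huIcc])).intervalIntegrable
  set I := ∫ z in a..b, f z with hI
  set c := I / (b - a) with hc
  have hba : (0:ℝ) < b - a := by linarith
  have h0 : 0 ≤ ∫ z in a..b, (f z - c) ^ 2 :=
    intervalIntegral.integral_nonneg hab.le (fun z _ => sq_nonneg _)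
  have hexp : ∫ z in a..b, (f z - c) ^ 2
      = (∫ z in a..b, (f z) ^ 2) - 2 * c * I + c ^ 2 * (b - a) := by
    have : (fun z => (f z - c) ^ 2) = fun z => (f z) ^ 2 - 2 * c * f z + c ^ 2 := by
      funext z; ring
    rw [this, intervalIntegral.integral_add (hint2.sub (hint.const_mul (2*c)))
      (intervalIntegrable_const (c := c^2))]
    · rw [intervalIntegral.integral_sub hint2 (hint.const_mul (2*c)),
        intervalIntegral.integral_const_mul, intervalIntegral.integral_const]
      simp [← hI]; ring
  rw [hexp] at h0
  have hc2 : c * (b - a) = I := by rw [hc, div_mul_cancel₀ _ hba.ne']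
  nlinarith [sq_nonneg (I - c * (b-a)), sq_nonneg c]

lemma omega_open {u : ℝ → ℝ} (hu_cont : ContinuousOn u (Icc (-1 : ℝ) 1)) :
    IsOpen (Omega u) := by
  rw [isOpen_iff_mem_nhds]
  rintro ⟨x, z⟩ ⟨hx, hz⟩
  have hxI : Icc (-1:ℝ) 1 ∈ nhds x := Icc_mem_nhds hx.1 hx.2
  have huat : ContinuousAt u x := hu_cont.continuousAt hxI
  have h1 : ∀ᶠ q : ℝ × ℝ in nhds (x, z), q.1 ∈ Ioo (-1:ℝ) 1 :=
    (isOpen_Ioo.preimage continuous_fst).mem_nhds hx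
  have h2 : ∀ᶠ q : ℝ × ℝ in nhds (x, z), -1 < q.2 :=
    (isOpen_lt continuous_const continuous_snd).mem_nhds hz.1
  have h3 : ∀ᶠ q : ℝ × ℝ in nhds (x, z), q.2 < u q.1 := by
    have hc : ContinuousAt (fun q : ℝ × ℝ => u q.1) (x, z) :=
      huat.comp continuousAt_fst
    exact ContinuousAt.eventually_lt continuousAt_snd hc hz.2
  filter_upwards [h1, h2, h3] with q hq1 hq2 hq3
  exact ⟨hq1, hq2, hq3⟩

lemma seg_closure {u : ℝ → ℝ} (hu_gt : ∀ x ∈ Ioo (-1:ℝ) 1, -1 < u x)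
    {x : ℝ} (hx : x ∈ Ioo (-1:ℝ) 1) {z : ℝ} (hz : z ∈ Icc (-1:ℝ) (u x)) :
    (x, z) ∈ closure (Omega u) := by
  have hux : -1 < u x := hu_gt x hx
  have hmaps : MapsTo (fun z : ℝ => (x, z)) (Ioo (-1:ℝ) (u x)) (Omega u) :=
    fun t ht => ⟨hx, ht⟩
  have hzc : z ∈ closure (Ioo (-1:ℝ) (u x)) := by
    rw [closure_Ioo hux.ne]; exact hz
  exact map_mem_closure (Continuous.prodMk_right x) hzc hmaps

/-- Weighted lower bound for the vertical Dirichlet integral of `ψ`,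
as an inequality in `[0,∞]`. -/
theorem stmt_7
    (u : ℝ → ℝ)
    (hu_cont : ContinuousOn u (Icc (-1 : ℝ) 1))
    (hu_gt : ∀ x ∈ Ioo (-1 : ℝ) 1, -1 < u x)
    (hu_bc : u (-1) = 0 ∧ u 1 = 0)
    (w : ℝ → ℝ)
    (hw_cont : ContinuousOn w (Icc (-1 : ℝ) 1))
    (hw_nonneg : ∀ x ∈ Icc (-1 : ℝ) 1, 0 ≤ w x)
    (ψ : ℝ × ℝ → ℝ)
    (hψ_cont : ContinuousOn ψ (closure (Omega u)))
    (hψ_smooth : ContDiffOn ℝ 1 ψ (Omega u))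
    (hψ_dz : ContinuousOn (pdz ψ) (closure (Omega u)))
    (hbot : ∀ x ∈ Ioo (-1 : ℝ) 1, ψ (x, -1) = 0)
    (htop : ∀ x ∈ Ioo (-1 : ℝ) 1, ψ (x, u x) = 1) :
    (∫⁻ x in Ioo (-1 : ℝ) 1, ENNReal.ofReal (w x / (1 + u x))) ≤
      ∫⁻ p in Omega u, ENNReal.ofReal (w p.1 * (pdz ψ p) ^ 2) := by
  classical
  set F : ℝ × ℝ → ℝ≥0∞ := fun p => ENNReal.ofReal (w p.1 * (pdz ψ p) ^ 2) with hF
  have hOpen : IsOpen (Omega u) := omega_open hu_cont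
  have hMeas : MeasurableSet (Omega u) := hOpen.measurableSet
  -- continuity of the integrand on Ω
  have hFcont : ContinuousOn F (Omega u) := by
    have h1 : ContinuousOn (fun p : ℝ × ℝ => w p.1) (Omega u) :=
      hw_cont.comp continuous_fst.continuousOn (fun p hp => Ioo_subset_Icc_self hp.1)
    have h2 : ContinuousOn (pdz ψ) (Omega u) := hψ_dz.mono subset_closure
    exact ENNReal.continuous_ofReal.comp_continuousOn (h1.mul (h2.pow 2))
  have hFind_meas : Measurable ((Omega u).indicator F) := by
    rw [← Set.piecewise_eq_indicator]
    exact ContinuousOn.measurable_piecewise hFcont continuousOn_const hMeas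
  -- Tonelli: write the RHS as an iterated integral
  have hRHS : (∫⁻ p in Omega u, F p)
      = ∫⁻ x, ∫⁻ z, (Omega u).indicator F (x, z) := by
    rw [← lintegral_indicator hMeas, MeasureTheory.Measure.volume_eq_prod]
    exact lintegral_prod _ hFind_meas.aemeasurable
  have hinner : ∀ x : ℝ, (∫⁻ z, (Omega u).indicator F (x, z))
      = (Ioo (-1:ℝ) 1).indicator (fun x => ∫⁻ z in Ioo (-1:ℝ) (u x), F (x, z)) x := by
    intro x
    by_cases hx : x ∈ Ioo (-1:ℝ) 1
    · rw [Set.indicator_of_mem hx, ← lintegral_indicator measurableSet_Ioo]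
      congr 1; funext z
      by_cases hz : z ∈ Ioo (-1:ℝ) (u x)
      · rw [Set.indicator_of_mem hz, Set.indicator_of_mem (show (x,z) ∈ Omega u from ⟨hx, hz⟩)]
      · rw [Set.indicator_of_notMem hz,
          Set.indicator_of_notMem (show (x,z) ∉ Omega u from fun h => hz h.2)]
    · rw [Set.indicator_of_notMem hx]
      have hzero : ∀ z : ℝ, (Omega u).indicator F (x, z) = 0 := fun z =>
        Set.indicator_of_notMem (fun h => hx h.1) _
      simp [hzero]
  have hRHS2 : (∫⁻ p in Omega u, F p)
      = ∫⁻ x in Ioo (-1:ℝ) 1, ∫⁻ z in Ioo (-1:ℝ) (u x), F (x, z) := by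
    rw [hRHS]
    simp_rw [hinner]
    rw [lintegral_indicator measurableSet_Ioo]
  rw [show (∫⁻ p in Omega u, ENNReal.ofReal (w p.1 * (pdz ψ p) ^ 2)) = ∫⁻ p in Omega u, F p from rfl,
    hRHS2]
  -- pointwise estimate
  refine lintegral_mono_ae ((ae_restrict_iff' measurableSet_Ioo).2 (Filter.Eventually.of_forall ?_))
  intro x hx
  have hux : (-1:ℝ) < u x := hu_gt x hx
  have hxIcc : x ∈ Icc (-1:ℝ) 1 := Ioo_subset_Icc_self hx
  have hw : 0 ≤ w x := hw_nonneg x hxIcc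
  set f : ℝ → ℝ := fun z => pdz ψ (x, z) with hfdef
  have hmapsIcc : MapsTo (fun z : ℝ => (x, z)) (Icc (-1:ℝ) (u x)) (closure (Omega u)) :=
    fun z hz => seg_closure hu_gt hx hz
  have hcontf : ContinuousOn f (Icc (-1:ℝ) (u x)) :=
    hψ_dz.comp (Continuous.prodMk_right x).continuousOn hmapsIcc
  have hcontψ : ContinuousOn (fun z => ψ (x, z)) (Icc (-1:ℝ) (u x)) :=
    hψ_cont.comp (Continuous.prodMk_right x).continuousOn hmapsIcc
  have hderiv : ∀ z ∈ Ioo (-1:ℝ) (u x), HasDerivWithinAt (fun t => ψ (x, t)) (f z) (Ioi z) z := by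
    intro z hz
    have hpΩ : (x, z) ∈ Omega u := ⟨hx, hz⟩
    have hdψ : DifferentiableAt ℝ ψ (x, z) :=
      (hψ_smooth.contDiffAt (hOpen.mem_nhds hpΩ)).differentiableAt one_ne_zero
    have hcomp : DifferentiableAt ℝ (fun t => ψ (x, t)) z :=
      hdψ.comp z (DifferentiableAt.prodMk (differentiableAt_const x) differentiableAt_id)
    exact hcomp.hasDerivAt.hasDerivWithinAt
  have hintf : IntervalIntegrable f volume (-1) (u x) :=
    (hcontf.mono (by rw [uIcc_of_le hux.le])).intervalIntegrable
  have hFTC : ∫ z in (-1:ℝ)..(u x), f z = 1 := by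
    rw [intervalIntegral.integral_eq_sub_of_hasDeriv_right_of_le hux.le hcontψ hderiv hintf,
      htop x hx, hbot x hx]
    norm_num
  set J := ∫ z in (-1:ℝ)..(u x), (f z) ^ 2 with hJ
  have hJ0 : 0 ≤ J := intervalIntegral.integral_nonneg hux.le (fun z _ => sq_nonneg _)
  have hcs : (1:ℝ) ≤ (u x + 1) * J := by
    have := cs_aux hux hcontf
    rw [hFTC] at this
    calc (1:ℝ) = 1 ^ 2 := by norm_num
    _ ≤ (u x - (-1)) * J := this
    _ = (u x + 1) * J := by ring
  have hreal : w x / (1 + u x) ≤ w x * J := by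
    rw [div_le_iff₀ (by linarith)]
    nlinarith [mul_le_mul_of_nonneg_left hcs hw]
  have hgc : ContinuousOn (fun z => w x * (f z) ^ 2) (Icc (-1:ℝ) (u x)) :=
    continuousOn_const.mul (hcontf.pow 2)
  have hgint : IntegrableOn (fun z => w x * (f z) ^ 2) (Ioo (-1:ℝ) (u x)) :=
    (hgc.integrableOn_Icc).mono_set Ioo_subset_Icc_self
  have hlin : (∫⁻ z in Ioo (-1:ℝ) (u x), F (x, z))
      = ENNReal.ofReal (∫ z in Ioo (-1:ℝ) (u x), w x * (f z) ^ 2) := by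
    rw [MeasureTheory.ofReal_integral_eq_lintegral_ofReal hgint
      (Filter.Eventually.of_forall fun z => mul_nonneg hw (sq_nonneg _))]
  have hIoo : ∫ z in Ioo (-1:ℝ) (u x), w x * (f z) ^ 2 = w x * J := by
    rw [← MeasureTheory.integral_Ioc_eq_integral_Ioo,
      ← intervalIntegral.integral_of_le hux.le, hJ, ← intervalIntegral.integral_const_mul]
  rw [hlin, hIoo]
  exact ENNReal.ofReal_le_ofReal hreal
end

section
/- Let β > 0, τ ≥ 0, and λ, α, μ₁ ∈ ℝ. Let u : [-1,1] → ℝ be four times continuously differentiable with u(±1) = u'(±1) = 0, let G : [-1,1] → ℝ be continuous with β u'''' − τ u'' = −λ G on (-1,1), let ζ : [-1,1] → ℝ be four times continuously differentiable with ζ(±1) = ζ'(±1) = 0 and β ζ'''' − τ ζ'' = μ₁ ζ on (-1,1), and let U : [-1,1] → ℝ be twice continuously differentiable with −U'' = u on (-1,1) and U(±1) = 0. Then λ ∫_{-1}^{1} (1 + αU) ζ G dx = − μ₁ ∫_{-1}^{1} (1 + αU) ζ u dx − αβ ∫_{-1}^{1} ζ (u')² dx − α ∫_{-1}^{1} (4β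 ζ''' − 2τ ζ') u U' dx − α ∫_{-1}^{1} ( τ ζ − (9β/2) ζ'' ) u² dx. -/
open Set MeasureTheory

private lemma stmt10_const_on_Ioo {f : ℝ → ℝ}
    (hf : ∀ x ∈ Ioo (-1:ℝ) 1, HasDerivAt f 0 x) :
    ∀ x ∈ Ioo (-1:ℝ) 1, ∀ y ∈ Ioo (-1:ℝ) 1, f x = f y := by
  have key : ∀ x y, x ∈ Ioo (-1:ℝ) 1 → y ∈ Ioo (-1:ℝ) 1 → x ≤ y → f y = f x := by
    intro x y hx hy hxy
    have hsub : Icc x y ⊆ Ioo (-1:ℝ) 1 := Set.ordConnected_Ioo.out hx hy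
    exact constant_of_has_deriv_right_zero
      (fun z hz => (hf z (hsub hz)).differentiableAt.continuousAt.continuousWithinAt)
      (fun z hz => (hf z (hsub (Ico_subset_Icc_self hz))).hasDerivWithinAt)
      y ⟨hxy, le_rfl⟩
  intro x hx y hy
  rcases le_total x y with h | h
  · exact (key x y hx hy h).symm
  · exact key y x hy hx h

private lemma stmt10_hasDeriv (β τ α : ℝ) (a0 a1 a2 a3 a4 z0 z1 z2 z3 z4 V0 V1 : ℝ → ℝ)
    (x : ℝ)
    (ha0 : HasDerivAt a0 (a1 x) x) (ha1 : HasDerivAt a1 (a2 x) x)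
    (ha2 : HasDerivAt a2 (a3 x) x) (ha3 : HasDerivAt a3 (a4 x) x)
    (hz0 : HasDerivAt z0 (z1 x) x) (hz1 : HasDerivAt z1 (z2 x) x)
    (hz2 : HasDerivAt z2 (z3 x) x) (hz3 : HasDerivAt z3 (z4 x) x)
    (hV0 : HasDerivAt V0 (V1 x) x) (hV1 : HasDerivAt V1 (-(a0 x)) x) :
    HasDerivAt (fun y => β * ((1 + α * V0 y) *
        (z0 y * a3 y - z1 y * a2 y + z2 y * a1 y - z3 y * a0 y)
        + α * (-(V1 y * z0 y * a2 y) + 2 * (V1 y * z1 y * a1 y) - 3 * (V1 y * z2 y * a0 y)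
            - z0 y * a0 y * a1 y + 3 / 2 * (z1 y * (a0 y * a0 y))))
      + τ * (-((1 + α * V0 y) * (z0 y * a1 y - a0 y * z1 y)) + α * (V1 y * z0 y * a0 y)))
      ((1 + α * V0 x) * z0 x * (β * a4 x - τ * a2 x)
        - (1 + α * V0 x) * a0 x * (β * z4 x - τ * z2 x)
        - α * β * (z0 x * a1 x ^ 2)
        - α * ((4 * β * z3 x - 2 * τ * z1 x) * a0 x * V1 x)
        - α * ((τ * z0 x - 9 * β / 2 * z2 x) * a0 x ^ 2)) x := by
  have hf : HasDerivAt (fun y => 1 + α * V0 y) (α * V1 x) x := (hV0.const_mul α).const_add 1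
  have hS := (((hz0.mul ha3).sub (hz1.mul ha2)).add (hz2.mul ha1)).sub (hz3.mul ha0)
  have H := (((hf.mul hS).add
      ((((((((hV1.mul hz0).mul ha2).neg).add (((hV1.mul hz1).mul ha1).const_mul 2)).sub
        (((hV1.mul hz2).mul ha0).const_mul 3)).sub ((hz0.mul ha0).mul ha1)).add
        ((hz1.mul (ha0.mul ha0)).const_mul (3/2))).const_mul α)).const_mul β).add
      ((((hf.mul ((hz0.mul ha1).sub (ha0.mul hz1))).neg).add
        (((hV1.mul hz0).mul ha0).const_mul α)).const_mul τ)
  exact H.congr_deriv (by simp only [Pi.mul_apply, Pi.sub_apply, Pi.add_apply, Pi.neg_apply]; ring)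

/-- The key integration-by-parts identity of the non-existence proof:
multiplying `β u'''' − τ u'' = −λ G` by the test function `(1 + αU) ζ`. -/
theorem stmt_10
    (β τ lam α μ₁ : ℝ) (hβ : 0 < β) (hτ : 0 ≤ τ)
    (u : ℝ → ℝ) (hu : ContDiff ℝ 4 u)
    (hu_bc : u (-1) = 0 ∧ u 1 = 0 ∧ deriv u (-1) = 0 ∧ deriv u 1 = 0)
    (G : ℝ → ℝ) (hG_cont : ContinuousOn G (Icc (-1 : ℝ) 1))
    (hu_eq : ∀ x ∈ Ioo (-1 : ℝ) 1,
      β * iteratedDeriv 4 u x - τ * iteratedDeriv 2 u x = - lam * G x)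
    (ζ : ℝ → ℝ) (hζ : ContDiff ℝ 4 ζ)
    (hζ_bc : ζ (-1) = 0 ∧ ζ 1 = 0 ∧ deriv ζ (-1) = 0 ∧ deriv ζ 1 = 0)
    (hζ_eq : ∀ x ∈ Ioo (-1 : ℝ) 1,
      β * iteratedDeriv 4 ζ x - τ * iteratedDeriv 2 ζ x = μ₁ * ζ x)
    (U : ℝ → ℝ) (hU : ContDiff ℝ 2 U)
    (hU_eq : ∀ x ∈ Ioo (-1 : ℝ) 1, - deriv (deriv U) x = u x)
    (hU_bc : U (-1) = 0 ∧ U 1 = 0) :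
    lam * (∫ x in (-1 : ℝ)..1, (1 + α * U x) * ζ x * G x) =
      - μ₁ * (∫ x in (-1 : ℝ)..1, (1 + α * U x) * ζ x * u x)
        - α * β * (∫ x in (-1 : ℝ)..1, ζ x * (deriv u x) ^ 2)
        - α * (∫ x in (-1 : ℝ)..1,
            (4 * β * iteratedDeriv 3 ζ x - 2 * τ * deriv ζ x) * u x * deriv U x)
        - α * (∫ x in (-1 : ℝ)..1,
            (τ * ζ x - 9 * β / 2 * iteratedDeriv 2 ζ x) * (u x) ^ 2) := by
  obtain ⟨hub1, hub2, hub3, hub4⟩ := hu_bc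
  obtain ⟨hzb1, hzb2, hzb3, hzb4⟩ := hζ_bc
  obtain ⟨hUb1, hUb2⟩ := hU_bc
  -- iterated derivative identifications
  have hiu2 : iteratedDeriv 2 u = deriv (deriv u) := by
    rw [iteratedDeriv_succ, iteratedDeriv_one]
  have hiu4 : iteratedDeriv 4 u = deriv (deriv (deriv (deriv u))) := by
    rw [iteratedDeriv_succ, iteratedDeriv_succ, hiu2]
  have hiz2 : iteratedDeriv 2 ζ = deriv (deriv ζ) := by
    rw [iteratedDeriv_succ, iteratedDeriv_one]
  have hiz3 : iteratedDeriv 3 ζ = deriv (deriv (deriv ζ)) := by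
    rw [iteratedDeriv_succ, hiz2]
  have hiz4 : iteratedDeriv 4 ζ = deriv (deriv (deriv (deriv ζ))) := by
    rw [iteratedDeriv_succ, hiz3]
  -- differentiability of the derivatives of u
  have hdu0 : Differentiable ℝ u := hu.differentiable (by norm_num)
  have hdu1 : Differentiable ℝ (deriv u) := by
    have := hu.differentiable_iteratedDeriv 1 (by norm_num)
    rwa [iteratedDeriv_one] at this
  have hdu2 : Differentiable ℝ (deriv (deriv u)) := by
    have := hu.differentiable_iteratedDeriv 2 (by norm_num)
    rwa [hiu2] at this
  have hdu3 : Differentiable ℝ (deriv (deriv (deriv u))) := by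
    have := hu.differentiable_iteratedDeriv 3 (by norm_num)
    rwa [iteratedDeriv_succ, hiu2] at this
  have hcu4 : Continuous (deriv (deriv (deriv (deriv u)))) := by
    have := hu.continuous_iteratedDeriv 4 (le_refl _)
    rwa [hiu4] at this
  -- differentiability of the derivatives of ζ
  have hdz0 : Differentiable ℝ ζ := hζ.differentiable (by norm_num)
  have hdz1 : Differentiable ℝ (deriv ζ) := by
    have := hζ.differentiable_iteratedDeriv 1 (by norm_num)
    rwa [iteratedDeriv_one] at this
  have hdz2 : Differentiable ℝ (deriv (deriv ζ)) := by
    have := hζ.differentiable_iteratedDeriv 2 (by norm_num)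
    rwa [hiz2] at this
  have hdz3 : Differentiable ℝ (deriv (deriv (deriv ζ))) := by
    have := hζ.differentiable_iteratedDeriv 3 (by norm_num)
    rwa [hiz3] at this
  have hcz4 : Continuous (deriv (deriv (deriv (deriv ζ)))) := by
    have := hζ.continuous_iteratedDeriv 4 (le_refl _)
    rwa [hiz4] at this
  -- U
  have hdU0 : Differentiable ℝ U := hU.differentiable (by norm_num)
  have hdU1 : Differentiable ℝ (deriv U) := by
    have := hU.differentiable_iteratedDeriv 1 (by norm_num)
    rwa [iteratedDeriv_one] at this
  -- the primitive P of u and the function V with V'' = -u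
  have hucont : Continuous u := hu.continuous
  set P : ℝ → ℝ := fun y => ∫ t in (0:ℝ)..y, u t with hPdef
  have hPd : ∀ x : ℝ, HasDerivAt P (u x) x := fun x =>
    intervalIntegral.integral_hasDerivAt_right (hucont.intervalIntegrable 0 x)
      (hucont.stronglyMeasurableAtFilter _ _) hucont.continuousAt
  have hPcont : Continuous P := by
    have : Differentiable ℝ P := fun x => (hPd x).differentiableAt
    exact this.continuous
  set V : ℝ → ℝ := fun y => U 0 + deriv U 0 * y - ∫ t in (0:ℝ)..y, P t with hVdef
  set V1 : ℝ → ℝ := fun y => deriv U 0 - P y with hV1def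
  have hV1cont : Continuous V1 := continuous_const.sub hPcont
  have hQd : ∀ x : ℝ, HasDerivAt (fun y => ∫ t in (0:ℝ)..y, P t) (P x) x := fun x =>
    intervalIntegral.integral_hasDerivAt_right (hPcont.intervalIntegrable 0 x)
      (hPcont.stronglyMeasurableAtFilter _ _) hPcont.continuousAt
  have hVd : ∀ x : ℝ, HasDerivAt V (V1 x) x := by
    intro x
    have h1 : HasDerivAt (fun y : ℝ => U 0 + deriv U 0 * y) (deriv U 0) x := by
      simpa using ((hasDerivAt_id x).const_mul (deriv U 0)).const_add (U 0)
    exact h1.sub (hQd x)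
  have hVcont : Continuous V := by
    have : Differentiable ℝ V := fun x => (hVd x).differentiableAt
    exact this.continuous
  have hV1d : ∀ x : ℝ, HasDerivAt V1 (-(u x)) x := by
    intro x
    exact ((hasDerivAt_const x (deriv U 0)).sub (hPd x)).congr_deriv (by ring)
  -- deriv U = V1 on Ioo
  have hgP : ∀ x ∈ Ioo (-1:ℝ) 1, deriv U x = V1 x := by
    have hconst := stmt10_const_on_Ioo (f := fun y => deriv U y + P y) ?_
    · intro x hx
      have h0 : (0:ℝ) ∈ Ioo (-1:ℝ) 1 := by norm_num
      have := hconst x hx 0 h0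
      have hP0 : P 0 = 0 := intervalIntegral.integral_same
      simp only [hV1def]
      rw [hP0] at this
      linarith
    · intro z hz
      have h1 : HasDerivAt (fun y => deriv U y + P y) (deriv (deriv U) z + u z) z :=
        ((hdU1 z).hasDerivAt).add (hPd z)
      have h2 : deriv (deriv U) z + u z = 0 := by
        have := hU_eq z hz; linarith
      rwa [h2] at h1
  -- U = V on Icc
  have hUV : ∀ x ∈ Icc (-1:ℝ) 1, U x = V x := by
    have hIoo : EqOn U V (Ioo (-1:ℝ) 1) := by
      intro x hx
      have hconst := stmt10_const_on_Ioo (f := fun y => U y - V y) ?_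
      · have h0 : (0:ℝ) ∈ Ioo (-1:ℝ) 1 := by norm_num
        have := hconst x hx 0 h0
        have hV0 : V 0 = U 0 := by
          simp [hVdef, intervalIntegral.integral_same]
        rw [hV0] at this
        linarith
      · intro z hz
        have h1 : HasDerivAt (fun y => U y - V y) (deriv U z - V1 z) z :=
          ((hdU0 z).hasDerivAt).sub (hVd z)
        have h2 : deriv U z - V1 z = 0 := by rw [hgP z hz]; ring
        rwa [h2] at h1
    have := hIoo.closure hdU0.continuous hVcont
    rwa [closure_Ioo (by norm_num : (-1:ℝ) ≠ 1)] at this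
  -- continuity abbreviations
  have hcu0 : Continuous u := hucont
  have hcu1 : Continuous (deriv u) := hdu1.continuous
  have hcu2 : Continuous (deriv (deriv u)) := hdu2.continuous
  have hcu3 : Continuous (deriv (deriv (deriv u))) := hdu3.continuous
  have hcz0 : Continuous ζ := hdz0.continuous
  have hcz1 : Continuous (deriv ζ) := hdz1.continuous
  have hcz2 : Continuous (deriv (deriv ζ)) := hdz2.continuous
  have hcz3 : Continuous (deriv (deriv (deriv ζ))) := hdz3.continuous
  have hcf : Continuous (fun x => 1 + α * V x) :=
    continuous_const.add (continuous_const.mul hVcont)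
  -- the five integrands
  set A : ℝ → ℝ := fun x => (1 + α * V x) * ζ x *
      (β * deriv (deriv (deriv (deriv u))) x - τ * deriv (deriv u) x) with hAdef
  set C1 : ℝ → ℝ := fun x => (1 + α * V x) * u x *
      (β * deriv (deriv (deriv (deriv ζ))) x - τ * deriv (deriv ζ) x) with hC1def
  set C2 : ℝ → ℝ := fun x => α * β * (ζ x * deriv u x ^ 2) with hC2def
  set C3 : ℝ → ℝ := fun x =>
      α * ((4 * β * deriv (deriv (deriv ζ)) x - 2 * τ * deriv ζ x) * u x * V1 x) with hC3def
  set C4 : ℝ → ℝ := fun x =>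
      α * ((τ * ζ x - 9 * β / 2 * deriv (deriv ζ) x) * u x ^ 2) with hC4def
  have hcA : Continuous A := (hcf.mul hcz0).mul
    ((continuous_const.mul hcu4).sub (continuous_const.mul hcu2))
  have hcC1 : Continuous C1 := (hcf.mul hcu0).mul
    ((continuous_const.mul hcz4).sub (continuous_const.mul hcz2))
  have hcC2 : Continuous C2 := continuous_const.mul (hcz0.mul (hcu1.pow 2))
  have hcC3 : Continuous C3 := continuous_const.mul
    ((((continuous_const.mul hcz3).sub (continuous_const.mul hcz1)).mul hcu0).mul hV1cont)
  have hcC4 : Continuous C4 := continuous_const.mul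
    (((continuous_const.mul hcz0).sub (continuous_const.mul hcz2)).mul (hcu0.pow 2))
  -- FTC : the integral of A - C1 - C2 - C3 - C4 vanishes
  have hI0 : (∫ x in (-1:ℝ)..1, (A x - C1 x - C2 x - C3 x - C4 x)) = 0 := by
    have hBder : ∀ x ∈ uIcc (-1:ℝ) 1,
        HasDerivAt (fun y => β * ((1 + α * V y) *
            (ζ y * deriv (deriv (deriv u)) y - deriv ζ y * deriv (deriv u) y
              + deriv (deriv ζ) y * deriv u y - deriv (deriv (deriv ζ)) y * u y)
          + α * (-(V1 y * ζ y * deriv (deriv u) y) + 2 * (V1 y * deriv ζ y * deriv u y)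
              - 3 * (V1 y * deriv (deriv ζ) y * u y)
              - ζ y * u y * deriv u y + 3 / 2 * (deriv ζ y * (u y * u y))))
          + τ * (-((1 + α * V y) * (ζ y * deriv u y - u y * deriv ζ y))
              + α * (V1 y * ζ y * u y)))
        (A x - C1 x - C2 x - C3 x - C4 x) x := by
      intro x _
      exact stmt10_hasDeriv β τ α u (deriv u) (deriv (deriv u)) (deriv (deriv (deriv u)))
        (deriv (deriv (deriv (deriv u)))) ζ (deriv ζ) (deriv (deriv ζ))
        (deriv (deriv (deriv ζ))) (deriv (deriv (deriv (deriv ζ)))) V V1 x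
        ((hdu0 x).hasDerivAt) ((hdu1 x).hasDerivAt) ((hdu2 x).hasDerivAt) ((hdu3 x).hasDerivAt)
        ((hdz0 x).hasDerivAt) ((hdz1 x).hasDerivAt) ((hdz2 x).hasDerivAt) ((hdz3 x).hasDerivAt)
        (hVd x) (hV1d x)
    have hint : IntervalIntegrable (fun x => A x - C1 x - C2 x - C3 x - C4 x)
        volume (-1:ℝ) 1 :=
      ((((hcA.sub hcC1).sub hcC2).sub hcC3).sub hcC4).intervalIntegrable _ _
    rw [intervalIntegral.integral_eq_sub_of_hasDerivAt hBder hint]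
    rw [hub2, hub4, hzb2, hzb4, hub1, hub3, hzb1, hzb3]
    ring
  -- integrability of the pieces
  have iA : IntervalIntegrable A volume (-1:ℝ) 1 := hcA.intervalIntegrable _ _
  have iC1 : IntervalIntegrable C1 volume (-1:ℝ) 1 := hcC1.intervalIntegrable _ _
  have iC2 : IntervalIntegrable C2 volume (-1:ℝ) 1 := hcC2.intervalIntegrable _ _
  have iC3 : IntervalIntegrable C3 volume (-1:ℝ) 1 := hcC3.intervalIntegrable _ _
  have iC4 : IntervalIntegrable C4 volume (-1:ℝ) 1 := hcC4.intervalIntegrable _ _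
  have heq : (∫ x in (-1:ℝ)..1, A x) - (∫ x in (-1:ℝ)..1, C1 x) - (∫ x in (-1:ℝ)..1, C2 x)
      - (∫ x in (-1:ℝ)..1, C3 x) - (∫ x in (-1:ℝ)..1, C4 x) = 0 := by
    rw [← intervalIntegral.integral_sub iA iC1,
      ← intervalIntegral.integral_sub (iA.sub iC1) iC2,
      ← intervalIntegral.integral_sub ((iA.sub iC1).sub iC2) iC3,
      ← intervalIntegral.integral_sub (((iA.sub iC1).sub iC2).sub iC3) iC4]
    exact hI0
  -- a.e. membership helper
  have hone : ∀ᵐ x : ℝ ∂(volume : Measure ℝ), x ≠ (1:ℝ) := by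
    simp only [MeasureTheory.ae_iff, not_not, Set.setOf_eq_eq_singleton]
    exact measure_singleton _
  have hmem : ∀ᵐ x : ℝ ∂(volume : Measure ℝ), x ∈ Set.uIoc (-1:ℝ) 1 → x ∈ Ioo (-1:ℝ) 1 := by
    filter_upwards [hone] with x hx h
    rw [uIoc_of_le (by norm_num : (-1:ℝ) ≤ 1)] at h
    exact ⟨h.1, lt_of_le_of_ne h.2 hx⟩
  -- identification of each integral
  have hA : (∫ x in (-1:ℝ)..1, A x)
      = -lam * ∫ x in (-1:ℝ)..1, (1 + α * U x) * ζ x * G x := by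
    rw [← intervalIntegral.integral_const_mul]
    refine intervalIntegral.integral_congr_ae ?_
    filter_upwards [hmem] with x hx h
    have hxI := hx h
    have hVU : V x = U x := (hUV x (Ioo_subset_Icc_self hxI)).symm
    have heqx := hu_eq x hxI
    rw [hiu4, hiu2] at heqx
    simp only [hAdef]
    rw [hVU, heqx]
    ring
  have hC1 : (∫ x in (-1:ℝ)..1, C1 x)
      = μ₁ * ∫ x in (-1:ℝ)..1, (1 + α * U x) * ζ x * u x := by
    rw [← intervalIntegral.integral_const_mul]
    refine intervalIntegral.integral_congr_ae ?_
    filter_upwards [hmem] with x hx h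
    have hxI := hx h
    have hVU : V x = U x := (hUV x (Ioo_subset_Icc_self hxI)).symm
    have heqx := hζ_eq x hxI
    rw [hiz4, hiz2] at heqx
    simp only [hC1def]
    rw [hVU, heqx]
    ring
  have hC2 : (∫ x in (-1:ℝ)..1, C2 x)
      = α * β * ∫ x in (-1:ℝ)..1, ζ x * (deriv u x) ^ 2 := by
    simp only [hC2def]
    rw [intervalIntegral.integral_const_mul]
  have hC3 : (∫ x in (-1:ℝ)..1, C3 x)
      = α * ∫ x in (-1:ℝ)..1,
          (4 * β * iteratedDeriv 3 ζ x - 2 * τ * deriv ζ x) * u x * deriv U x := by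
    rw [hiz3, ← intervalIntegral.integral_const_mul]
    refine intervalIntegral.integral_congr_ae ?_
    filter_upwards [hmem] with x hx h
    have hxI := hx h
    simp only [hC3def]
    rw [hgP x hxI]
  have hC4 : (∫ x in (-1:ℝ)..1, C4 x)
      = α * ∫ x in (-1:ℝ)..1,
          (τ * ζ x - 9 * β / 2 * iteratedDeriv 2 ζ x) * (u x) ^ 2 := by
    simp only [hC4def]
    rw [hiz2, intervalIntegral.integral_const_mul]
  rw [hA, hC1, hC2, hC3, hC4] at heq
  linarith
end
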